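/- Let H and H' be n-dimensional complex Hilbert spaces carrying generic labelled pairs of maximal abelian subalgebras with base points, ((e_x)_{x∈X}, (f_y)_{y∈Y}, x₀, y₀) on H and ((e'_x)_{x∈X}, (f'_y)_{y∈Y}, x₀, y₀) on H', with CKM matrices C and C' respectively. Then there exists a unitary operator V : H → H' with V e_x V* = e'_x for all x ∈ X and V f_y V* = f'_y for all y ∈ Y if and only if C = C'. -/

import Mathlib

noncomputable section

open scoped ComplexInnerProductSpace ComplexConjugate

/-- A complex number is a strictly positive real. -/
def IsPosReal (z : ℂ) : Prop := 0 < z.re ∧ z.im = 0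

variable {H : Type} [NormedAddCommGroup H] [InnerProductSpace ℂ H] [FiniteDimensional ℂ H]
variable {X Y : Type} [Fintype X] [Fintype Y]

/-- A family of pairwise orthogonal rank-one orthogonal projections summing to
the identity. -/
def IsProjFamily (e : X → H →L[ℂ] H) : Prop :=
  (∀ x, IsIdempotentElem (e x)) ∧ (∀ x, IsSelfAdjoint (e x)) ∧
  (∀ x, Module.finrank ℂ (LinearMap.range ((e x : H →L[ℂ] H) : H →ₗ[ℂ] H)) = 1) ∧
  (∀ x x', x ≠ x' → e x * e x' = 0) ∧ (∑ x, e x = 1)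

/-- Genericity of a labelled pair with base points: `Tr (e x₀ * f y) > 0` for all `y`
and `Tr (e x * f y₀) > 0` for all `x`. -/
def IsGeneric (e : X → H →L[ℂ] H) (f : Y → H →L[ℂ] H) (x₀ : X) (y₀ : Y) : Prop :=
  (∀ y, IsPosReal (LinearMap.trace ℂ H ((e x₀ * f y : H →L[ℂ] H) : H →ₗ[ℂ] H))) ∧
  (∀ x, IsPosReal (LinearMap.trace ℂ H ((e x * f y₀ : H →L[ℂ] H) : H →ₗ[ℂ] H)))

/-- `C` is the CKM matrix of the generic labelled pair `(e, f, x₀, y₀)`: there are unit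
vectors `ξ, η` with `e x₀ ξ = ξ`, `f y₀ η = η`, `⟪ξ, η⟫ > 0`, and families of unit
vectors `xi x` (resp. `eta y`) fixed by `e x` (resp. `f y`) with `⟪xi x, η⟫ > 0`
(resp. `⟪ξ, eta y⟫ > 0`), such that `C x y = ⟪xi x, eta y⟫`. -/
def IsCKM (e : X → H →L[ℂ] H) (f : Y → H →L[ℂ] H) (x₀ : X) (y₀ : Y)
    (C : X → Y → ℂ) : Prop :=
  ∃ (ξ η : H) (xi : X → H) (eta : Y → H),
    ‖ξ‖ = 1 ∧ ‖η‖ = 1 ∧ e x₀ ξ = ξ ∧ f y₀ η = η ∧ IsPosReal ⟪ξ, η⟫ ∧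
    (∀ x, ‖xi x‖ = 1 ∧ e x (xi x) = xi x ∧ IsPosReal ⟪xi x, η⟫) ∧
    (∀ y, ‖eta y‖ = 1 ∧ f y (eta y) = eta y ∧ IsPosReal ⟪ξ, eta y⟫) ∧
    (∀ x y, C x y = ⟪xi x, eta y⟫)


/-- If `a = z * b` with `a, b` strictly positive reals and `‖z‖ = 1`, then `z = 1`. -/
lemma pos_unit_eq_one {z a b : ℂ} (hz : ‖z‖ = 1) (ha : IsPosReal a) (hb : IsPosReal b)
    (h : a = z * b) : z = 1 := by
  obtain ⟨har, hai⟩ := ha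
  obtain ⟨hbr, hbi⟩ := hb
  have him : z.im = 0 := by
    have h1 : a.im = z.im * b.re := by rw [h, Complex.mul_im, hbi]; ring
    rw [hai] at h1
    rcases mul_eq_zero.mp h1.symm with h2 | h2
    · exact h2
    · exact absurd h2 (ne_of_gt hbr)
  have hre : z.re = a.re / b.re := by
    have h1 : a.re = z.re * b.re := by rw [h, Complex.mul_re, hbi, him]; ring
    field_simp [h1]
    linarith [h1]
  have hzpos : 0 < z.re := by rw [hre]; positivity
  have habs : ‖z‖ = |z.re| := by
    rw [Complex.norm_def, Complex.normSq_apply, him]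
    simp [← sq, Real.sqrt_sq_eq_abs]
  have hone : z.re = 1 := by
    have h1 := habs ▸ hz
    rwa [abs_of_pos hzpos] at h1
  exact Complex.ext hone him

/-- If `conj z * w = 1` with `‖z‖ = 1` then `w = z`. -/
lemma conj_mul_eq_one {z w : ℂ} (hz : ‖z‖ = 1) (h : (starRingEnd ℂ) z * w = 1) : w = z := by
  have hz0 : (starRingEnd ℂ) z ≠ 0 := by
    simp only [ne_eq, map_eq_zero]
    intro h0; rw [h0] at hz; simp at hz
  have h2 : (starRingEnd ℂ) z * z = 1 := by
    rw [mul_comm, Complex.mul_conj, Complex.normSq_eq_norm_sq, hz]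
    norm_num
  exact mul_left_cancel₀ hz0 (h.trans h2.symm)

/-- Inner product symmetry for a self-adjoint continuous linear map. -/
lemma sa_inner (p : H →L[ℂ] H) (hsa : IsSelfAdjoint p) (a b : H) :
    ⟪p a, b⟫ = ⟪a, p b⟫ := by
  have h2 := (ContinuousLinearMap.isSelfAdjoint_iff_isSymmetric.mp hsa) a b
  simpa only [ContinuousLinearMap.coe_coe] using h2

/-- A self-adjoint map with one-dimensional range fixing a unit vector `u`
acts as the rank-one projection onto `u`. -/
lemma proj_formula (p : H →L[ℂ] H) (hsa : IsSelfAdjoint p)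
    (hr : Module.finrank ℂ (LinearMap.range ((p : H →L[ℂ] H) : H →ₗ[ℂ] H)) = 1)
    (u : H) (hu : ‖u‖ = 1) (hfix : p u = u) (v : H) :
    p v = ⟪u, v⟫ • u := by
  have hu0 : u ≠ 0 := by
    intro h0; rw [h0] at hu; simp at hu
  set W := LinearMap.range ((p : H →L[ℂ] H) : H →ₗ[ℂ] H) with hW
  have huW : u ∈ W := ⟨u, hfix⟩
  have hpvW : p v ∈ W := ⟨v, rfl⟩
  have hu0' : (⟨u, huW⟩ : W) ≠ 0 := by
    intro h0
    exact hu0 (congrArg Subtype.val h0)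
  obtain ⟨c, hc⟩ := (finrank_eq_one_iff_of_nonzero' (⟨u, huW⟩ : W) hu0').mp hr ⟨p v, hpvW⟩
  have hc' : c • u = p v := congrArg Subtype.val hc
  have hinner : ⟪u, p v⟫ = ⟪u, v⟫ := by rw [← sa_inner p hsa u v, hfix]
  have hcc : ⟪u, c • u⟫ = c := by
    rw [inner_smul_right, inner_self_eq_norm_sq_to_K, hu]
    norm_num
  rw [hc', hinner] at hcc
  rw [hcc, hc']

/-- Expansion of a vector in terms of the fixed unit vectors of a projection family. -/
lemma expand_vec (e : X → H →L[ℂ] H)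
    (hsa : ∀ x, IsSelfAdjoint (e x))
    (hr : ∀ x, Module.finrank ℂ (LinearMap.range ((e x : H →L[ℂ] H) : H →ₗ[ℂ] H)) = 1)
    (hsum : ∑ x, e x = 1)
    (xi : X → H) (hxi : ∀ x, ‖xi x‖ = 1 ∧ e x (xi x) = xi x) (v : H) :
    v = ∑ x, ⟪xi x, v⟫ • xi x := by
  conv_lhs => rw [show v = (1 : H →L[ℂ] H) v from rfl, ← hsum]
  rw [ContinuousLinearMap.sum_apply]
  exact Finset.sum_congr rfl fun x _ =>
    proj_formula (e x) (hsa x) (hr x) (xi x) (hxi x).1 (hxi x).2 v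

/-- **Proposition 2.3 (completeness).** Two generic labelled pairs of maximal abelian
subalgebras with the same base points, on `n`-dimensional complex Hilbert spaces `H` and
`H'`, are conjugate by a unitary `V : H → H'` (with `V e_x V* = e'_x`, `V f_y V* = f'_y`)
if and only if their CKM matrices coincide. -/
theorem stmt2 {n : ℕ} {H H' : Type}
    [NormedAddCommGroup H] [InnerProductSpace ℂ H] [FiniteDimensional ℂ H]
    [NormedAddCommGroup H'] [InnerProductSpace ℂ H'] [FiniteDimensional ℂ H']
    (hdim : Module.finrank ℂ H = n) (hdim' : Module.finrank ℂ H' = n)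
    {X Y : Type} [Fintype X] [Fintype Y]
    (hX : Fintype.card X = n) (hY : Fintype.card Y = n)
    (e : X → H →L[ℂ] H) (f : Y → H →L[ℂ] H)
    (e' : X → H' →L[ℂ] H') (f' : Y → H' →L[ℂ] H')
    (x₀ : X) (y₀ : Y)
    (he : IsProjFamily e) (hf : IsProjFamily f)
    (he' : IsProjFamily e') (hf' : IsProjFamily f')
    (hgen : IsGeneric e f x₀ y₀) (hgen' : IsGeneric e' f' x₀ y₀)
    (C C' : X → Y → ℂ) (hC : IsCKM e f x₀ y₀ C) (hC' : IsCKM e' f' x₀ y₀ C') :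
    (∃ V : H ≃ₗᵢ[ℂ] H',
        (∀ x, ∀ v, V (e x v) = e' x (V v)) ∧ (∀ y, ∀ v, V (f y v) = f' y (V v))) ↔
      C = C'  := by
  obtain ⟨hei, hesa, her, heo, hes⟩ := he
  obtain ⟨hfi, hfsa, hfr, hfo, hfs⟩ := hf
  obtain ⟨hei', hesa', her', heo', hes'⟩ := he'
  obtain ⟨hfi', hfsa', hfr', hfo', hfs'⟩ := hf'
  obtain ⟨ξ, η, xi, eta, hξ, hη, hξfix, hηfix, hξη, hxi, heta, hCval⟩ := hC
  obtain ⟨ξ', η', xi', eta', hξ'1, hη'1, hξfix', hηfix', hξη', hxi', heta', hCval'⟩ := hC'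
  constructor
  · rintro ⟨V, hVe, hVf⟩
    -- coefficients of images of the distinguished vectors
    have hVfix : ∀ (p' : H' →L[ℂ] H'), IsSelfAdjoint p' →
        Module.finrank ℂ (LinearMap.range ((p' : H' →L[ℂ] H') : H' →ₗ[ℂ] H')) = 1 →
        ∀ (u' : H'), ‖u'‖ = 1 → p' u' = u' → ∀ (w : H), p' (V w) = V w →
        V w = ⟪u', V w⟫ • u' := by
      intro p' hsa' hr' u' hu' hfixu' w hfw
      conv_lhs => rw [← hfw]
      exact proj_formula p' hsa' hr' u' hu' hfixu' (V w)
    have hVxi : ∀ x, V (xi x) = (⟪xi' x, V (xi x)⟫ : ℂ) • xi' x := fun x =>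
      hVfix (e' x) (hesa' x) (her' x) (xi' x) (hxi' x).1 (hxi' x).2.1 (xi x)
        (by rw [← hVe x (xi x), (hxi x).2.1])
    have hVeta : ∀ y, V (eta y) = (⟪eta' y, V (eta y)⟫ : ℂ) • eta' y := fun y =>
      hVfix (f' y) (hfsa' y) (hfr' y) (eta' y) (heta' y).1 (heta' y).2.1 (eta y)
        (by rw [← hVf y (eta y), (heta y).2.1])
    have hVξ : V ξ = (⟪ξ', V ξ⟫ : ℂ) • ξ' :=
      hVfix (e' x₀) (hesa' x₀) (her' x₀) ξ' hξ'1 hξfix' ξ (by rw [← hVe x₀ ξ, hξfix])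
    have hVη : V η = (⟪η', V η⟫ : ℂ) • η' :=
      hVfix (f' y₀) (hfsa' y₀) (hfr' y₀) η' hη'1 hηfix' η (by rw [← hVf y₀ η, hηfix])
    -- the coefficients have modulus one
    have hnorm : ∀ (w : H) (u' : H') (c : ℂ), ‖w‖ = 1 → ‖u'‖ = 1 → V w = c • u' →
        ‖c‖ = 1 := by
      intro w u' c hw hu' hvc
      have h1 : ‖V w‖ = ‖w‖ := V.norm_map w
      rw [hvc, norm_smul, hu', hw] at h1
      simpa using h1
    set α : X → ℂ := fun x => ⟪xi' x, V (xi x)⟫ with hα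
    set β : Y → ℂ := fun y => ⟪eta' y, V (eta y)⟫ with hβ
    set γ : ℂ := ⟪ξ', V ξ⟫ with hγ
    set ω : ℂ := ⟪η', V η⟫ with hω
    have hαn : ∀ x, ‖α x‖ = 1 := fun x => hnorm _ _ _ (hxi x).1 (hxi' x).1 (hVxi x)
    have hβn : ∀ y, ‖β y‖ = 1 := fun y => hnorm _ _ _ (heta y).1 (heta' y).1 (hVeta y)
    have hγn : ‖γ‖ = 1 := hnorm _ _ _ hξ hξ'1 hVξ
    have hωn : ‖ω‖ = 1 := hnorm _ _ _ hη hη'1 hVη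
    -- inner products transform with the phases
    have hinner : ∀ (a b : H) (a' b' : H') (ca cb : ℂ), V a = ca • a' → V b = cb • b' →
        ⟪a, b⟫ = (starRingEnd ℂ) ca * cb * ⟪a', b'⟫ := by
      intro a b a' b' ca cb hva hvb
      rw [← V.inner_map_map a b, hva, hvb, inner_smul_left, inner_smul_right]
      ring
    -- positivity forces the phases to coincide
    have hphase : ∀ (a : H) (a' : H') (c : ℂ), ‖c‖ = 1 → V a = c • a' →
        ∀ (b : H) (b' : H') (d : ℂ), ‖d‖ = 1 → V b = d • b' →
        IsPosReal ⟪a, b⟫ → IsPosReal ⟪a', b'⟫ → d = c := by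
      intro a a' c hcn hva b b' d hdn hvb hpos hpos'
      have h1 := hinner a b a' b' c d hva hvb
      have h2 : (starRingEnd ℂ) c * d = 1 := by
        have hz : ‖(starRingEnd ℂ) c * d‖ = 1 := by
          rw [norm_mul, RCLike.norm_conj, hcn, hdn]; norm_num
        exact pos_unit_eq_one hz hpos hpos' h1
      exact conj_mul_eq_one hcn h2
    have hαω : ∀ x, ω = α x := fun x =>
      hphase (xi x) (xi' x) (α x) (hαn x) (hVxi x) η η' ω hωn hVη
        (hxi x).2.2 (hxi' x).2.2
    have hγω : ω = γ :=
      hphase ξ ξ' γ hγn hVξ η η' ω hωn hVη hξη hξη'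
    have hβγ : ∀ y, β y = γ := fun y =>
      hphase ξ ξ' γ hγn hVξ (eta y) (eta' y) (β y) (hβn y) (hVeta y)
        (heta y).2.2 (heta' y).2.2
    funext x y
    rw [hCval x y, hCval' x y]
    have h1 := hinner (xi x) (eta y) (xi' x) (eta' y) (α x) (β y) (hVxi x) (hVeta y)
    rw [h1, ← hαω x, hβγ y, ← hγω]
    rw [mul_comm ((starRingEnd ℂ) ω) ω, Complex.mul_conj, Complex.normSq_eq_norm_sq,
      hωn]
    norm_num
  · intro hCC'
    classical
    -- the xi's form orthonormal bases
    have honxi : Orthonormal ℂ xi := by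
      rw [orthonormal_iff_ite]
      intro i j
      by_cases hij : i = j
      · subst hij
        simp [inner_self_eq_norm_sq_to_K, (hxi i).1]
      · simp only [if_neg hij]
        have h0 : e i * e j = 0 := heo i j hij
        calc ⟪xi i, xi j⟫ = ⟪e i (xi i), e j (xi j)⟫ := by rw [(hxi i).2.1, (hxi j).2.1]
          _ = ⟪xi i, e i (e j (xi j))⟫ := sa_inner (e i) (hesa i) (xi i) (e j (xi j))
          _ = ⟪xi i, (e i * e j) (xi j)⟫ := by rw [ContinuousLinearMap.mul_apply]
          _ = 0 := by rw [h0]; simp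
    have honxi' : Orthonormal ℂ xi' := by
      rw [orthonormal_iff_ite]
      intro i j
      by_cases hij : i = j
      · subst hij
        simp [inner_self_eq_norm_sq_to_K, (hxi' i).1]
      · simp only [if_neg hij]
        have h0 : e' i * e' j = 0 := heo' i j hij
        calc ⟪xi' i, xi' j⟫ = ⟪e' i (xi' i), e' j (xi' j)⟫ := by
              rw [(hxi' i).2.1, (hxi' j).2.1]
          _ = ⟪xi' i, e' i (e' j (xi' j))⟫ := sa_inner (e' i) (hesa' i) (xi' i) (e' j (xi' j))
          _ = ⟪xi' i, (e' i * e' j) (xi' j)⟫ := by rw [ContinuousLinearMap.mul_apply]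
          _ = 0 := by rw [h0]; simp
    have hsp : ⊤ ≤ Submodule.span ℂ (Set.range xi) := by
      intro v _
      have hv := expand_vec e hesa her hes xi (fun x => ⟨(hxi x).1, (hxi x).2.1⟩) v
      rw [hv]
      exact Submodule.sum_mem _ fun x _ =>
        Submodule.smul_mem _ _ (Submodule.subset_span ⟨x, rfl⟩)
    have hsp' : ⊤ ≤ Submodule.span ℂ (Set.range xi') := by
      intro v _
      have hv := expand_vec e' hesa' her' hes' xi' (fun x => ⟨(hxi' x).1, (hxi' x).2.1⟩) v
      rw [hv]
      exact Submodule.sum_mem _ fun x _ =>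
        Submodule.smul_mem _ _ (Submodule.subset_span ⟨x, rfl⟩)
    set b : OrthonormalBasis X ℂ H := OrthonormalBasis.mk honxi hsp with hb
    set b' : OrthonormalBasis X ℂ H' := OrthonormalBasis.mk honxi' hsp' with hb'
    set V : H ≃ₗᵢ[ℂ] H' := b.repr.trans b'.repr.symm with hV
    have hVxi : ∀ x, V (xi x) = xi' x := by
      intro x
      have h1 : xi x = b x := (congrFun (OrthonormalBasis.coe_mk honxi hsp) x).symm
      have h2 : xi' x = b' x := (congrFun (OrthonormalBasis.coe_mk honxi' hsp') x).symm
      rw [h1, h2, hV]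
      simp only [LinearIsometryEquiv.trans_apply, OrthonormalBasis.repr_self]
      rw [← OrthonormalBasis.repr_self b' x, LinearIsometryEquiv.symm_apply_apply]
    have hVeta : ∀ y, V (eta y) = eta' y := by
      intro y
      have h1 := expand_vec e hesa her hes xi (fun x => ⟨(hxi x).1, (hxi x).2.1⟩) (eta y)
      have h2 := expand_vec e' hesa' her' hes' xi' (fun x => ⟨(hxi' x).1, (hxi' x).2.1⟩) (eta' y)
      conv_rhs => rw [h2]
      rw [h1, map_sum]
      refine Finset.sum_congr rfl fun x _ => ?_
      rw [LinearIsometryEquiv.map_smul, hVxi x]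
      congr 1
      have h3 := congrFun (congrFun hCC' x) y
      rw [hCval x y, hCval' x y] at h3
      exact h3
    refine ⟨V, fun x v => ?_, fun y v => ?_⟩
    · rw [proj_formula (e x) (hesa x) (her x) (xi x) (hxi x).1 (hxi x).2.1 v,
        proj_formula (e' x) (hesa' x) (her' x) (xi' x) (hxi' x).1 (hxi' x).2.1 (V v),
        LinearIsometryEquiv.map_smul, hVxi x, ← hVxi x, V.inner_map_map]
    · rw [proj_formula (f y) (hfsa y) (hfr y) (eta y) (heta y).1 (heta y).2.1 v,
        proj_formula (f' y) (hfsa' y) (hfr' y) (eta' y) (heta' y).1 (heta' y).2.1 (V v),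
        LinearIsometryEquiv.map_smul, hVeta y, ← hVeta y, V.inner_map_map]
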